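/- Fix a positive integer n and a probability p ∈ (0,1/2). Let a_1,…,a_n be nonzero real numbers and let ξ_1,…,ξ_n be independent Bernoulli(p) random variables (each equal to 1 with probability p and to 0 with probability 1−p). Then for every real number x, Pr[a_1ξ_1 + ⋯ + a_nξ_n = x] ≤ M(⌊n/2⌋, p). -/

import Mathlib

open MeasureTheory Filter

/-- Product of (independent) Bernoulli distributions on `ι → Bool`, with
success probability `q i` in coordinate `i`. -/
noncomputable def bernoulliProduct (ι : Type*) [Fintype ι] [DecidableEq ι] (q : ι → ℝ) :
    Measure (ι → Bool) :=
  ∑ f : ι → Bool,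
    (∏ i : ι, if f i then ENNReal.ofReal (q i) else ENNReal.ofReal (1 - q i)) •
      Measure.dirac f

/-- The Erdős–Rényi measure: each (potential) edge of the complete graph on `Fin n`
is present independently with probability `p`; encoded as a random `Sym2 (Fin n) → Bool`. -/
noncomputable def erdosRenyiMeasure (n : ℕ) (p : ℝ) : Measure (Sym2 (Fin n) → Bool) :=
  bernoulliProduct (Sym2 (Fin n)) fun _ => p

/-- The graph on `Fin n` determined by an edge-indicator function. -/
def graphOfFlip {n : ℕ} (f : Sym2 (Fin n) → Bool) : SimpleGraph (Fin n) :=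
  SimpleGraph.fromRel fun u v => f s(u, v) = true

/-- Symmetric difference of two graphs on the same vertex set. -/
def symmDiffG {V : Type*} (G₁ G₂ : SimpleGraph V) : SimpleGraph V :=
  SimpleGraph.fromRel fun u v => Xor' (G₁.Adj u v) (G₂.Adj u v)

/-- `crEquiv G c t u v` : vertices `u` and `v` get the same colour after `t` rounds of
colour refinement on `G`, starting from the colouring `c`. -/
def crEquiv {V : Type*} {Ω : Type*} (G : SimpleGraph V) (c : V → Ω) : ℕ → V → V → Prop
  | 0, u, v => c u = c v
  | (t + 1), u, v => crEquiv G c t u v ∧ ∀ w : V,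
      Nat.card {x : V // G.Adj u x ∧ crEquiv G c t x w} =
      Nat.card {x : V // G.Adj v x ∧ crEquiv G c t x w}

/-- `u` and `v` get the same colour in the stable colouring `R* c`. -/
def crStable {V : Type*} {Ω : Type*} (G : SimpleGraph V) (c : V → Ω) (u v : V) : Prop :=
  ∀ t, crEquiv G c t u v

/-- `u` and `v` get the same colour in the stable colouring `R* σ`
(colour refinement started from the trivial colouring). -/
def crStableTrivial {V : Type*} (G : SimpleGraph V) (u v : V) : Prop :=
  crStable G (fun _ => (0 : ℕ)) u v

/-- Equality of the initial pair-colourings `φ_{G,c}` on two ordered pairs of vertices. -/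
def wl2Init {V : Type*} {Ω : Type*} (G : SimpleGraph V) (c : V → Ω) (p q : V × V) : Prop :=
  (G.Adj p.1 p.2 ↔ G.Adj q.1 q.2) ∧ (p.1 = p.2 ↔ q.1 = q.2) ∧
    (p.1 = p.2 → q.1 = q.2 → c p.2 = c q.2)

/-- `wl2Equiv G c t p q` : the ordered pairs `p` and `q` get the same colour after `t` rounds of
the 2-dimensional Weisfeiler–Leman refinement on `G`, started from `φ_{G,c}`. -/
def wl2Equiv {V : Type*} {Ω : Type*} (G : SimpleGraph V) (c : V → Ω) :
    ℕ → V × V → V × V → Prop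
  | 0, p, q => wl2Init G c p q
  | (t + 1), p, q => wl2Equiv G c t p q ∧ ∀ r s : V × V,
      Nat.card {w : V // wl2Equiv G c t (p.1, w) r ∧ wl2Equiv G c t (w, p.2) s} =
      Nat.card {w : V // wl2Equiv G c t (q.1, w) r ∧ wl2Equiv G c t (w, q.2) s}

/-- `u` and `v` get the same colour in the vertex colouring `V* c` obtained from the stable
pair colouring of the 2-dimensional Weisfeiler–Leman algorithm started from `φ_{G,c}`. -/
def wl2VertexEquiv {V : Type*} {Ω : Type*} (G : SimpleGraph V) (c : V → Ω) (u v : V) : Prop :=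
  ∀ t, wl2Equiv G c t (u, u) (v, v)

/-- Given a colouring of `V(H)` encoded as the equivalence relation `r` ("has the same colour"),
`majority H r u v` says that at least half of the possible edges between the colour class of `u`
and the colour class of `v` are present in `H` (counting ordered pairs). -/
def majority {V : Type*} (H : SimpleGraph V) (r : V → V → Prop) (u v : V) : Prop :=
  Nat.card {p : V × V // p.1 ≠ p.2 ∧ r p.1 u ∧ r p.2 v} ≤
    2 * Nat.card {p : V × V // p.1 ≠ p.2 ∧ r p.1 u ∧ r p.2 v ∧ H.Adj p.1 p.2}

/-- The disparity graph `D(H,c)`, for the colouring encoded by the relation `r`. -/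
def disparity {V : Type*} (H : SimpleGraph V) (r : V → V → Prop) : SimpleGraph V :=
  SimpleGraph.fromRel fun u v => Xor' (H.Adj u v) (majority H r u v)

/-- The generalised disparity graph `D_L(H,c)` for a 0-1 matrix `L` on colours. -/
def gDisparity {V : Type*} {Ω : Type*} (H : SimpleGraph V) (c : V → Ω) (L : Ω → Ω → Bool) :
    SimpleGraph V :=
  SimpleGraph.fromRel fun u v => Xor' (H.Adj u v) (L (c u) (c v) = true)

/-- The vertex set of the connected component of `v` in `G`. -/
def compSet {V : Type*} (G : SimpleGraph V) (v : V) : Set V := {u | G.Reachable v u}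

/-- A colouring is equitable if any two vertices with the same colour have the same number of
neighbours in every colour class. -/
def IsEquitable {V : Type*} {Ω : Type*} (H : SimpleGraph V) (c : V → Ω) : Prop :=
  ∀ u v, c u = c v → ∀ a : Ω,
    Nat.card {x : V // H.Adj u x ∧ c x = a} = Nat.card {x : V // H.Adj v x ∧ c x = a}

/-- Vertex set of the `k`-core of `G`: the union of all vertex sets inducing minimum
degree at least `k`. -/
def kCore {V : Type*} (G : SimpleGraph V) (k : ℕ) : Set V :=
  ⋃₀ {S : Set V | ∀ v ∈ S, k ≤ Nat.card {u : V // u ∈ S ∧ G.Adj v u}}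

/-- `V_{2,3}(G)`: vertices of the 2-core of `G` having degree at least 3 in the 2-core. -/
def V23 {V : Type*} (G : SimpleGraph V) : Set V :=
  {v | v ∈ kCore G 2 ∧ 3 ≤ Nat.card {u : V // u ∈ kCore G 2 ∧ G.Adj v u}}

/-- The graph obtained from `G` by deleting all edges meeting `T`
(so that reachability in `avoidG G T` from `v ∉ T` is reachability in `G - T`). -/
def avoidG {V : Type*} (G : SimpleGraph V) (T : Set V) : SimpleGraph V :=
  SimpleGraph.fromRel fun u v => G.Adj u v ∧ u ∉ T ∧ v ∉ T

/-- `V_{2,3}^{safe}(G)`: vertices `v ∈ V_{2,3}(G)` such that after deleting any set of at most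
two other vertices, the component of `v` still contains at least 3 vertices of `V_{2,3}(G)`. -/
def V23safe {V : Type*} (G : SimpleGraph V) : Set V :=
  {v | v ∈ V23 G ∧ ∀ T : Finset V, T.card ≤ 2 → v ∉ T →
    3 ≤ Nat.card {w : V // w ∈ V23 G ∧ (avoidG G (T : Set V)).Reachable v w}}

open Classical in
/-- `Lmul G i u v w` is the multiplicity of the vertex `w` in the multiset `L^i_G(u,v)`. -/
noncomputable def Lmul {V : Type*} [Fintype V] (G : SimpleGraph V) : ℕ → V → V → V → ℕ
  | 0, u, _, w => if w = u then 1 else 0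
  | (i + 1), u, v, w =>
      (∑ x : V, if G.Adj w x then Lmul G i u v x else 0) -
        (∑ x : V, if G.Adj w x then Lmul G i v u x else 0)

/-- Union over `j < i` of the supports of `L^j_G(u,v)` and `L^j_G(v,u)`. -/
noncomputable def Sbelow {V : Type*} [Fintype V] (G : SimpleGraph V) (u v : V) (i : ℕ) :
    Set V :=
  {w | ∃ j < i, 0 < Lmul G j u v w ∨ 0 < Lmul G j v u w}

/-- `S^{≤ i}_G({u,v})`. -/
noncomputable def Sle {V : Type*} [Fintype V] (G : SimpleGraph V) (u v : V) (i : ℕ) : Set V :=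
  Sbelow G u v (i + 1)

/-- `S^{i}_G({u,v}) = S^{≤ i}_G({u,v}) \ S^{≤ i-1}_G({u,v})`. -/
noncomputable def Sat {V : Type*} [Fintype V] (G : SimpleGraph V) (u v : V) (i : ℕ) : Set V :=
  Sbelow G u v (i + 1) \ Sbelow G u v i

/-- Degree of a vertex (as `Nat.card` of the neighbour set, avoiding decidability issues). -/
noncomputable def ncDegree {V : Type*} (G : SimpleGraph V) (v : V) : ℕ :=
  Nat.card {u : V // G.Adj v u}

/-- The random refinement of a colouring `c`: each vertex `v` with `f v = true` receives
a brand-new colour unique to itself. -/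
def refineColor {V : Type*} {Ω : Type*} (c : V → Ω) (f : V → Bool) : V → Ω ⊕ V :=
  fun v => if f v then Sum.inr v else Sum.inl (c v)

/-- `D(H,c)` (for the colouring encoded by the relation `r`) is `s`-bounded: every
intersection of a colour class with a connected component of `D(H,c)` has at most
`s` elements. -/
def sBounded {V : Type*} (H : SimpleGraph V) (r : V → V → Prop) (s : ℕ) : Prop :=
  ∀ u v : V, Nat.card {w : V // r w u ∧ w ∈ compSet (disparity H r) v} ≤ s

/-- The type of canonical colours after `t` rounds of colour refinement. -/
def CCol : ℕ → Type
  | 0 => Unit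
  | (t + 1) => CCol t × Multiset (CCol t)

open Classical in
/-- The canonical colour of a vertex after `t` rounds of colour refinement. -/
noncomputable def canonColor {V : Type*} [Fintype V] (G : SimpleGraph V) :
    (t : ℕ) → V → CCol t
  | 0, _ => ()
  | (t + 1), v =>
      (canonColor G t v, (Finset.univ.filter fun w => G.Adj v w).val.map (canonColor G t))

/-- The modal probability `M(m,p)` of a `Binomial(m,p)` random variable. -/
noncomputable def modalProb (m : ℕ) (p : ℝ) : ℝ :=
  (m.choose ⌊(m + 1 : ℝ) * p⌋₊ : ℝ) * p ^ ⌊(m + 1 : ℝ) * p⌋₊ *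
    (1 - p) ^ (m - ⌊(m + 1 : ℝ) * p⌋₊)


section auxiliaryLemmas
open Finset

noncomputable def bT (m k : ℕ) (p : ℝ) : ℝ := (m.choose k : ℝ) * p ^ k * (1 - p) ^ (m - k)

lemma bT_nonneg {p : ℝ} (hp0 : 0 ≤ p) (hp1 : p ≤ 1) (m k : ℕ) : 0 ≤ bT m k p := by
  have h1 : (0:ℝ) ≤ 1 - p := by linarith
  have := pow_nonneg hp0 k
  have := pow_nonneg h1 (m - k)
  have : (0:ℝ) ≤ (m.choose k : ℝ) := Nat.cast_nonneg _
  unfold bT; positivity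

lemma bT_ratio {p : ℝ} (m k : ℕ) (hk : k < m) :
    bT m (k+1) p * ((k+1 : ℕ) * (1 - p)) = bT m k p * ((m - k : ℕ) * p) := by
  unfold bT
  have h1 : m - (k+1) + 1 = m - k := by omega
  have h2 : (1 - p) ^ (m - k) = (1-p) ^ (m - (k+1)) * (1-p) := by
    rw [← pow_succ, h1]
  have h4 : m.choose (k+1) * (k+1) = m.choose k * (m - k) := Nat.choose_succ_right_eq m k
  have h3 : (m.choose (k+1) : ℝ) * ((k+1:ℕ) : ℝ) = (m.choose k : ℝ) * ((m - k : ℕ) : ℝ) := by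
    exact_mod_cast congrArg (Nat.cast (R := ℝ)) h4
  rw [h2, pow_succ]
  push_cast at h3 ⊢
  linear_combination (p ^ k * p * (1 - p) ^ (m - (k+1)) * (1 - p)) * h3

section unimodal

lemma kstar_le {p : ℝ} (hp0 : 0 < p) (hp1 : p < 1/2) (m : ℕ) : ⌊(m + 1 : ℝ) * p⌋₊ ≤ m := by
  have hm : (0:ℝ) < (m:ℝ) + 1 := by positivity
  have h : (m + 1 : ℝ) * p < m + 1 := by nlinarith
  have h2 : ⌊(m + 1 : ℝ) * p⌋₊ < m + 1 := by
    rw [Nat.floor_lt (by positivity)]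
    exact_mod_cast h
  omega

lemma bT_up {p : ℝ} (hp0 : 0 < p) (hp1 : p < 1/2) (m : ℕ) {k : ℕ}
    (hk : (k + 1 : ℝ) ≤ (m + 1 : ℝ) * p) (hkm : k < m) :
    bT m k p ≤ bT m (k+1) p := by
  have hq : (0:ℝ) < 1 - p := by linarith
  have hr := bT_ratio (p := p) m k hkm
  have hX : (0:ℝ) < ((k+1:ℕ):ℝ) * (1 - p) := by positivity
  have hXY : ((k+1:ℕ):ℝ) * (1 - p) ≤ ((m-k:ℕ):ℝ) * p := by
    have hmk : ((m-k:ℕ):ℝ) = (m:ℝ) - k := by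
      push_cast [Nat.cast_sub hkm.le]; ring
    rw [hmk]; push_cast; nlinarith
  have hb := bT_nonneg (le_of_lt hp0) (by linarith) m k
  have key : bT m k p * (((k+1:ℕ):ℝ) * (1 - p)) ≤ bT m (k+1) p * (((k+1:ℕ):ℝ) * (1 - p)) := by
    rw [hr]; nlinarith
  exact le_of_mul_le_mul_right key hX

lemma bT_down {p : ℝ} (hp0 : 0 < p) (hp1 : p < 1/2) (m : ℕ) {k : ℕ}
    (hk : (m + 1 : ℝ) * p < (k + 1 : ℝ)) :
    bT m (k+1) p ≤ bT m k p := by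
  have hq : (0:ℝ) < 1 - p := by linarith
  by_cases hkm : k < m
  · have hr := bT_ratio (p := p) m k hkm
    have hX : (0:ℝ) < ((k+1:ℕ):ℝ) * (1 - p) := by positivity
    have hXY : ((m-k:ℕ):ℝ) * p ≤ ((k+1:ℕ):ℝ) * (1 - p) := by
      have hmk : ((m-k:ℕ):ℝ) = (m:ℝ) - k := by
        push_cast [Nat.cast_sub hkm.le]; ring
      rw [hmk]; push_cast; nlinarith
    have hb := bT_nonneg (le_of_lt hp0) (by linarith) m k
    have h2 : bT m (k+1) p * (((k+1:ℕ):ℝ) * (1 - p)) ≤ bT m k p * (((k+1:ℕ):ℝ) * (1 - p)) := by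
      rw [hr]; nlinarith
    exact le_of_mul_le_mul_right h2 hX
  · have hc : m.choose (k+1) = 0 := Nat.choose_eq_zero_of_lt (by omega)
    have hz : bT m (k+1) p = 0 := by unfold bT; rw [hc]; simp
    rw [hz]
    exact bT_nonneg (le_of_lt hp0) (by linarith) m k

lemma bT_le_mode {p : ℝ} (hp0 : 0 < p) (hp1 : p < 1/2) (m k : ℕ) :
    bT m k p ≤ bT m ⌊(m + 1 : ℝ) * p⌋₊ p := by
  set K := ⌊(m + 1 : ℝ) * p⌋₊ with hK
  have hK0 : (0:ℝ) ≤ (m+1:ℝ)*p := by positivity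
  rcases le_or_gt k K with h | h
  · have main : ∀ t, ∀ j, j + t = K → bT m j p ≤ bT m K p := by
      intro t
      induction t with
      | zero => intro j hj; simp at hj; rw [hj]
      | succ s ih =>
        intro j hj
        have hjK : j < K := by omega
        have h1 : (j + 1 : ℝ) ≤ (m + 1 : ℝ) * p := by
          have hcast : ((j+1:ℕ):ℝ) ≤ (K:ℝ) := by exact_mod_cast (by omega : (j+1:ℕ) ≤ K)
          push_cast at hcast
          linarith [Nat.floor_le hK0]
        have hjm : j < m := lt_of_lt_of_le hjK (kstar_le hp0 hp1 m)
        exact le_trans (bT_up hp0 hp1 m h1 hjm) (ih (j+1) (by omega))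
    exact main (K - k) k (by omega)
  · have main : ∀ t, bT m (K + t) p ≤ bT m K p := by
      intro t
      induction t with
      | zero => simp
      | succ s ih =>
        have h1 : (m + 1 : ℝ) * p < ((K + s : ℕ) + 1 : ℝ) := by
          have h2 := Nat.lt_floor_add_one ((m+1:ℝ)*p)
          have h3 : ((K:ℕ):ℝ) ≤ ((K + s:ℕ):ℝ) := by exact_mod_cast Nat.le_add_right K s
          push_cast at h2 h3 ⊢
          linarith
        have hstep := bT_down hp0 hp1 m (k := K + s) h1
        have he : K + (s+1) = (K + s) + 1 := by omega
        rw [he]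
        exact le_trans hstep ih
    have h2 := main (k - K)
    have hk' : K + (k - K) = k := by omega
    rwa [hk'] at h2

lemma bT_sum_one {p : ℝ} (m : ℕ) : ∑ k ∈ range (m+1), bT m k p = 1 := by
  have h := add_pow p (1-p) m
  have h1 : p + (1-p) = 1 := by ring
  rw [h1, one_pow] at h
  unfold bT
  conv_rhs => rw [h]
  apply Finset.sum_congr rfl
  intro k _
  ring

lemma bT_sq_sum_le_modal {p : ℝ} (hp0 : 0 < p) (hp1 : p < 1/2) (m : ℕ) :
    ∑ k ∈ range (m+1), (bT m k p)^2 ≤ modalProb m p := by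
  have hmodal : modalProb m p = bT m ⌊(m + 1 : ℝ) * p⌋₊ p := rfl
  rw [hmodal]
  calc ∑ k ∈ range (m+1), (bT m k p)^2
      ≤ ∑ k ∈ range (m+1), bT m ⌊(m + 1 : ℝ) * p⌋₊ p * bT m k p := by
        apply Finset.sum_le_sum
        intro k _
        have h1 := bT_le_mode hp0 hp1 m k
        have h2 := bT_nonneg (le_of_lt hp0) (by linarith) m k
        nlinarith
    _ = bT m ⌊(m + 1 : ℝ) * p⌋₊ p * ∑ k ∈ range (m+1), bT m k p := by
        rw [Finset.mul_sum]
    _ = bT m ⌊(m + 1 : ℝ) * p⌋₊ p := by rw [bT_sum_one]; ring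

end unimodal

section fourier
open Complex

noncomputable def ζN (N : ℕ) : ℂ := Complex.exp (2 * Real.pi * Complex.I / N)

lemma zetaN_ne_zero (N : ℕ) : ζN N ≠ 0 := Complex.exp_ne_zero _

lemma zetaN_prim {N : ℕ} (hN : N ≠ 0) : IsPrimitiveRoot (ζN N) N :=
  Complex.isPrimitiveRoot_exp N hN

lemma zetaN_abs {N : ℕ} (y : ℤ) : ‖(ζN N ^ y)‖ = 1 := by
  rw [norm_zpow]
  have h1 : ‖(ζN N)‖ = 1 := by
    unfold ζN
    rw [Complex.norm_exp]
    have : (2 * (Real.pi:ℂ) * Complex.I / (N:ℂ)).re = 0 := by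
      simp [Complex.div_re]
    rw [this, Real.exp_zero]
  rw [h1, one_zpow]

lemma zetaN_conj {N : ℕ} (y : ℤ) :
    (starRingEnd ℂ) (ζN N ^ y) = ζN N ^ (-y) := by
  rw [map_zpow₀]
  have h1 : (starRingEnd ℂ) (ζN N) = (ζN N)⁻¹ := by
    unfold ζN
    rw [← Complex.exp_conj]
    rw [← Complex.exp_neg]
    congr 1
    simp only [map_div₀, map_mul, Complex.conj_I, Complex.conj_ofReal, map_ofNat, map_natCast]
    ring
  rw [h1, inv_zpow, ← zpow_neg]

lemma zetaN_zpow_one_iff {N : ℕ} (hN : N ≠ 0) (y : ℤ) :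
    ζN N ^ y = 1 ↔ (N:ℤ) ∣ y :=
  (zetaN_prim hN).zpow_eq_one_iff_dvd y

lemma zpow_sum' {ι : Type*} (ζ : ℂ) (hz : ζ ≠ 0) (s : Finset ι) (g : ι → ℤ) :
    ζ ^ (∑ i ∈ s, g i) = ∏ i ∈ s, ζ ^ g i := by
  classical
  induction s using Finset.induction with
  | empty => simp
  | insert _ _ h ih => rw [Finset.sum_insert h, Finset.prod_insert h, zpow_add₀ hz, ih]

lemma orthN {N : ℕ} (hN : N ≠ 0) (y : ℤ) :
    ∑ t ∈ range N, ζN N ^ (y * (t:ℤ)) = if (N:ℤ) ∣ y then (N:ℂ) else 0 := by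
  have hrw : ∀ t : ℕ, ζN N ^ (y * (t:ℤ)) = (ζN N ^ y) ^ t := by
    intro t
    rw [zpow_mul, zpow_natCast]
  simp_rw [hrw]
  by_cases h : (N:ℤ) ∣ y
  · have h1 : ζN N ^ y = 1 := (zetaN_zpow_one_iff hN y).mpr h
    rw [h1]
    simp [if_pos h]
  · have h1 : ζN N ^ y ≠ 1 := fun hc => h ((zetaN_zpow_one_iff hN y).mp hc)
    rw [geom_sum_eq h1]
    have h2 : (ζN N ^ y) ^ N = 1 := by
      rw [← zpow_natCast, ← zpow_mul, mul_comm, zpow_mul, (zetaN_zpow_one_iff hN (N:ℤ)).mpr dvd_rfl, one_zpow]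
    rw [h2]
    simp [if_neg h]

lemma zetaN_congr {N : ℕ} (hN : N ≠ 0) {y y' : ℤ} (h : (y : ZMod N) = (y' : ZMod N)) :
    ζN N ^ y = ζN N ^ y' := by
  have hd : (N:ℤ) ∣ (y - y') := by
    rwa [← ZMod.intCast_zmod_eq_zero_iff_dvd, Int.cast_sub, sub_eq_zero]
  have h1 : ζN N ^ (y - y') = 1 := (zetaN_zpow_one_iff hN _).mpr hd
  calc ζN N ^ y = ζN N ^ (y - y') * ζN N ^ y' := by
        rw [← zpow_add₀ (zetaN_ne_zero N)]; congr 1; ring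
    _ = ζN N ^ y' := by rw [h1, one_mul]

end fourier

section expansion
open Complex

lemma expansion (n N : ℕ) (p : ℝ) (z : Fin n → ℤ) (t : ℤ) :
    ∏ i : Fin n, (((1-p:ℝ):ℂ) + ((p:ℝ):ℂ) * ζN N ^ (z i * t)) =
    ∑ f : Fin n → Bool,
      (∏ i : Fin n, if f i then ((p:ℝ):ℂ) else ((1-p:ℝ):ℂ)) *
        ζN N ^ ((∑ i : Fin n, if f i then z i else 0) * t) := by
  classical
  have h0 : ∀ i : Fin n, (((1-p:ℝ):ℂ) + ((p:ℝ):ℂ) * ζN N ^ (z i * t)) =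
      (((p:ℝ):ℂ) * ζN N ^ (z i * t) + ((1-p:ℝ):ℂ)) := fun i => add_comm _ _
  rw [Finset.prod_congr rfl (fun i _ => h0 i)]
  rw [Finset.prod_add]
  apply Finset.sum_nbij' (i := fun S : Finset (Fin n) => (fun j => (j ∈ S : Bool)))
    (j := fun f : Fin n → Bool => Finset.univ.filter (fun j => f j = true))
  · intro S _; exact Finset.mem_univ _
  · intro f _; exact Finset.mem_powerset.mpr (Finset.subset_univ _)
  · intro S _
    ext j
    simp
  · intro f _
    funext j
    simp
  · intro S _
    simp only [decide_eq_true_eq]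
    have h1 : ∏ i ∈ S, ((p:ℝ):ℂ) * ζN N ^ (z i * t) =
        (∏ i ∈ S, ((p:ℝ):ℂ)) * ζN N ^ ((∑ i ∈ S, z i) * t) := by
      rw [Finset.prod_mul_distrib]
      congr 1
      rw [Finset.sum_mul, zpow_sum' _ (zetaN_ne_zero N)]
    have h2 : (∏ i : Fin n, if i ∈ S then ((p:ℝ):ℂ) else ((1-p:ℝ):ℂ)) =
        (∏ i ∈ S, ((p:ℝ):ℂ)) * (∏ i ∈ Finset.univ \ S, ((1-p:ℝ):ℂ)) := by
      rw [Finset.prod_ite (fun _ => ((p:ℝ):ℂ)) (fun _ => ((1-p:ℝ):ℂ))]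
      congr 1
      · congr 1
        ext j; simp
      · congr 1
        rw [Finset.sdiff_eq_filter]
    have h3 : (∑ i : Fin n, if i ∈ S then z i else 0) = ∑ i ∈ S, z i := by
      rw [Finset.sum_ite_mem, Finset.univ_inter]
    rw [h1, h2, h3]
    ring
end expansion

section sumabs
open Complex Finset

lemma dvd_iff_eq_of_lt {N m k l : ℕ} (hk : k < m + 1) (hl : l < m + 1) (hmN : m < N) :
    ((N:ℤ) ∣ ((k:ℤ) - (l:ℤ))) ↔ k = l := by
  constructor
  · intro h
    by_contra hne
    have h1 : ((k:ℤ) - l).natAbs ≠ 0 := by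
      intro h0
      exact hne (by omega : k = l)
    have h2 : (N:ℤ) ∣ (((k:ℤ) - l).natAbs : ℤ) := (Int.dvd_natAbs).mpr h
    have h3 : N ∣ ((k:ℤ) - l).natAbs := Int.ofNat_dvd.mp h2
    have h4 : N ≤ ((k:ℤ) - l).natAbs := Nat.le_of_dvd (Nat.pos_of_ne_zero h1) h3
    have h5 : ((k:ℤ) - l).natAbs ≤ m := by omega
    omega
  · rintro rfl
    simp

lemma sum_abs_sq_pow (N m : ℕ) (hN : N ≠ 0) (hmN : m < N) (p : ℝ) :
    ∑ t ∈ range N, (‖(((1-p:ℝ):ℂ) + ((p:ℝ):ℂ) * ζN N ^ ((t:ℕ):ℤ))‖) ^ (2*m)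
      = (N:ℝ) * ∑ k ∈ range (m+1), (bT m k p)^2 := by
  classical
  set ζ := ζN N with hζ
  set c : ℕ → ℂ := fun t => (((1-p:ℝ):ℂ) + ((p:ℝ):ℂ) * ζ ^ ((t:ℕ):ℤ)) with hc
  set cf : ℕ → ℂ := fun k => ((p:ℝ):ℂ)^k * (((1-p:ℝ):ℂ))^(m-k) * ((m.choose k : ℕ):ℂ) with hcf
  -- step 1: reduce to complex identity
  have habs : ∀ t : ℕ, (‖(c t)‖) ^ (2*m) = (Complex.normSq (c t))^m := by
    intro t
    rw [pow_mul, Complex.sq_norm]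
  rw [Finset.sum_congr rfl (fun t _ => habs t)]
  have hcast : ((∑ t ∈ range N, (Complex.normSq (c t))^m : ℝ) : ℂ)
      = ((N:ℝ) * ∑ k ∈ range (m+1), (bT m k p)^2 : ℂ) → (∑ t ∈ range N, (Complex.normSq (c t))^m : ℝ) = (N:ℝ) * ∑ k ∈ range (m+1), (bT m k p)^2 := by
    intro h
    exact_mod_cast h
  apply hcast
  push_cast
  -- per t expansion
  have hconj : ∀ t : ℕ, (starRingEnd ℂ) (c t) = (((1-p:ℝ):ℂ) + ((p:ℝ):ℂ) * ζ ^ (-((t:ℕ):ℤ))) := by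
    intro t
    simp only [hc, map_add, map_mul, Complex.conj_ofReal]
    rw [zetaN_conj]
  have hpow : ∀ (e : ℤ), (((1-p:ℝ):ℂ) + ((p:ℝ):ℂ) * ζ ^ e)^m
      = ∑ k ∈ range (m+1), cf k * ζ ^ (e * k) := by
    intro e
    rw [add_comm, add_pow]
    apply Finset.sum_congr rfl
    intro k _
    have h1 : (((p:ℝ):ℂ) * ζ ^ e)^k = ((p:ℝ):ℂ)^k * ζ ^ (e * k) := by
      rw [mul_pow]
      congr 1
      rw [← zpow_natCast (ζ ^ e) k, ← zpow_mul]
    rw [h1, hcf]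
    ring
  have hterm : ∀ t : ℕ, ((Complex.normSq (c t) : ℝ):ℂ)^m
      = ∑ l ∈ range (m+1), ∑ k ∈ range (m+1), (cf l * cf k) * ζ ^ (((k:ℤ) - (l:ℤ)) * (t:ℕ)) := by
    intro t
    rw [Complex.normSq_eq_conj_mul_self, mul_pow, hconj, hpow, hc, hpow]
    rw [Finset.sum_mul_sum]
    apply Finset.sum_congr rfl
    intro l _
    apply Finset.sum_congr rfl
    intro k _
    have h2 : ζ ^ (-((t:ℕ):ℤ) * l) * ζ ^ (((t:ℕ):ℤ) * k) = ζ ^ (((k:ℤ) - (l:ℤ)) * (t:ℕ)) := by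
      rw [← zpow_add₀ (zetaN_ne_zero N)]
      congr 1
      ring
    calc cf l * ζ ^ (-((t:ℕ):ℤ) * l) * (cf k * ζ ^ (((t:ℕ):ℤ) * k))
        = (cf l * cf k) * (ζ ^ (-((t:ℕ):ℤ) * l) * ζ ^ (((t:ℕ):ℤ) * k)) := by ring
      _ = (cf l * cf k) * ζ ^ (((k:ℤ) - (l:ℤ)) * (t:ℕ)) := by rw [h2]
  -- sum over t and use orthogonality
  calc ∑ t ∈ range N, ((Complex.normSq (c t) : ℝ):ℂ)^m
      = ∑ t ∈ range N, ∑ l ∈ range (m+1), ∑ k ∈ range (m+1),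
          (cf l * cf k) * ζ ^ (((k:ℤ) - (l:ℤ)) * (t:ℕ)) := by
        exact Finset.sum_congr rfl (fun t _ => hterm t)
    _ = ∑ l ∈ range (m+1), ∑ k ∈ range (m+1), (cf l * cf k) *
          (∑ t ∈ range N, ζ ^ (((k:ℤ) - (l:ℤ)) * (t:ℕ))) := by
        rw [Finset.sum_comm]
        apply Finset.sum_congr rfl
        intro l _
        rw [Finset.sum_comm]
        apply Finset.sum_congr rfl
        intro k _
        rw [Finset.mul_sum]
    _ = ∑ l ∈ range (m+1), ∑ k ∈ range (m+1), (cf l * cf k) *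
          (if k = l then (N:ℂ) else 0) := by
        apply Finset.sum_congr rfl
        intro l hl
        apply Finset.sum_congr rfl
        intro k hk
        rw [orthN hN]
        congr 1
        rw [if_congr (dvd_iff_eq_of_lt (Finset.mem_range.mp hk) (Finset.mem_range.mp hl) hmN) rfl rfl]
    _ = ∑ l ∈ range (m+1), (cf l * cf l) * (N:ℂ) := by
        apply Finset.sum_congr rfl
        intro l hl
        rw [Finset.sum_eq_single l]
        · rw [if_pos rfl]
        · intro k _ hkl
          rw [if_neg hkl, mul_zero]
        · intro h
          exact absurd hl h
    _ = (N:ℂ) * ∑ k ∈ range (m+1), ((bT m k p : ℝ):ℂ)^2 := by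
        rw [Finset.mul_sum]
        apply Finset.sum_congr rfl
        intro l _
        have : ((bT m l p : ℝ):ℂ) = cf l := by
          unfold bT
          rw [hcf]
          push_cast
          ring
        rw [this]
        ring
end sumabs

section reindex
open Finset

lemma sum_range_zmod (N : ℕ) [NeZero N] (G : ZMod N → ℝ) :
    ∑ t ∈ range N, G ((t:ℕ) : ZMod N) = ∑ u : ZMod N, G u := by
  apply Finset.sum_nbij' (i := fun t : ℕ => ((t:ℕ) : ZMod N)) (j := fun u : ZMod N => u.val)
  · intro t _; exact Finset.mem_univ _
  · intro u _; exact Finset.mem_range.mpr (ZMod.val_lt u)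
  · intro t ht; exact ZMod.val_cast_of_lt (Finset.mem_range.mp ht)
  · intro u _; exact ZMod.natCast_rightInverse u
  · intro t _; rfl

lemma sum_zmod_mul (N : ℕ) [Fact N.Prime] (G : ZMod N → ℝ) {a : ZMod N} (ha : a ≠ 0) :
    ∑ u : ZMod N, G (a * u) = ∑ u : ZMod N, G u := by
  exact Fintype.sum_bijective (fun u => a * u)
    (Equiv.mulLeft₀ a ha).bijective (fun u => G (a * u)) G (fun u => rfl)

lemma amgm {n : ℕ} (hn : 0 < n) (x : Fin n → ℝ) (hx : ∀ i, 0 ≤ x i) :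
    ∏ i, x i ≤ (1/(n:ℝ)) * ∑ i, (x i)^n := by
  have hnR : (0:ℝ) < n := by exact_mod_cast hn
  have h := Real.geom_mean_le_arith_mean_weighted Finset.univ (fun _ => (n:ℝ)⁻¹)
    (fun i => (x i)^n) (fun i _ => inv_nonneg.mpr (Nat.cast_nonneg n))
    (by rw [Finset.sum_const, Finset.card_univ, Fintype.card_fin, nsmul_eq_mul]
        field_simp)
    (fun i _ => pow_nonneg (hx i) n)
  have h2 : ∀ i : Fin n, ((x i)^n) ^ ((n:ℝ)⁻¹) = x i := by
    intro i
    rw [← Real.rpow_natCast (x i) n, ← Real.rpow_mul (hx i)]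
    rw [mul_inv_cancel₀ (by positivity), Real.rpow_one]
  simp_rw [h2] at h
  calc ∏ i, x i ≤ ∑ i : Fin n, (n:ℝ)⁻¹ * (x i)^n := h
    _ = (1/(n:ℝ)) * ∑ i, (x i)^n := by rw [Finset.mul_sum]; apply Finset.sum_congr rfl; intros; ring

end reindex

section keyint
open Complex Finset

theorem key_int (n : ℕ) (hn : 0 < n) (p : ℝ) (hp0 : 0 < p) (hp1 : p < 1/2)
    (z : Fin n → ℤ) (hz : ∀ i, z i ≠ 0) (w : ℤ) :
    (∑ f : Fin n → Bool, if (∑ i, if f i then z i else 0) = w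
        then (∏ i, if f i then p else 1-p) else 0) ≤ modalProb (n / 2) p := by
  classical
  have hq : (0:ℝ) < 1 - p := by linarith
  set m := n / 2 with hm
  -- choose a large prime N
  set B := Finset.univ.sup (fun i => (z i).natAbs) with hB
  obtain ⟨N, hNge, hNp⟩ := Nat.exists_infinite_primes (B + m + 2)
  haveI : Fact N.Prime := ⟨hNp⟩
  haveI : NeZero N := ⟨hNp.ne_zero⟩
  have hN0 : N ≠ 0 := hNp.ne_zero
  have hmN : m < N := by omega
  have h2mn : 2 * m ≤ n := by omega
  have hzB : ∀ i, (z i).natAbs ≤ B := fun i => Finset.le_sup (f := fun j => (z j).natAbs) (Finset.mem_univ i)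
  have hzN : ∀ i, ((z i : ℤ) : ZMod N) ≠ 0 := by
    intro i h
    rw [ZMod.intCast_zmod_eq_zero_iff_dvd] at h
    have h2 : (N:ℤ) ∣ ((z i).natAbs : ℤ) := (Int.dvd_natAbs).mpr h
    have h3 : N ∣ (z i).natAbs := Int.ofNat_dvd.mp h2
    have h4 : (z i).natAbs ≠ 0 := fun h0 => (hz i) (Int.natAbs_eq_zero.mp h0)
    have h5 : N ≤ (z i).natAbs := Nat.le_of_dvd (Nat.pos_of_ne_zero h4) h3
    have := hzB i
    omega
  -- notation
  set ζ := ζN N with hζ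
  set Sf : (Fin n → Bool) → ℤ := fun f => (∑ i, if f i then z i else 0) with hSf
  set Wre : (Fin n → Bool) → ℝ := fun f => (∏ i, if f i then p else 1-p) with hWre
  have hWnn : ∀ f, 0 ≤ Wre f := by
    intro f
    apply Finset.prod_nonneg
    intro i _
    by_cases h : f i <;> simp [h] <;> linarith
  set T : ℂ := ∑ t ∈ range N, ζ ^ (-(w * (t:ℤ))) *
      ∏ i, (((1-p:ℝ):ℂ) + ((p:ℝ):ℂ) * ζ ^ (z i * (t:ℤ))) with hT
  -- step 1 : T as a sum over f
  have h1 : T = ∑ f : Fin n → Bool,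
      ((Wre f : ℝ):ℂ) * (if (N:ℤ) ∣ (Sf f - w) then (N:ℂ) else 0) := by
    rw [hT]
    have hper : ∀ t ∈ range N, ζ ^ (-(w * (t:ℤ))) *
        ∏ i, (((1-p:ℝ):ℂ) + ((p:ℝ):ℂ) * ζ ^ (z i * (t:ℤ)))
        = ∑ f : Fin n → Bool, ((Wre f : ℝ):ℂ) * ζ ^ ((Sf f - w) * (t:ℤ)) := by
      intro t _
      rw [expansion n N p z (t:ℤ), Finset.mul_sum]
      apply Finset.sum_congr rfl
      intro f _
      have hWc : (∏ i : Fin n, if f i then ((p:ℝ):ℂ) else ((1-p:ℝ):ℂ)) = ((Wre f : ℝ):ℂ) := by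
        rw [hWre]
        push_cast
        apply Finset.prod_congr rfl
        intro i _
        by_cases h : f i <;> simp [h]
      have hzp : ζ ^ (-(w * (t:ℤ))) * ζ ^ ((Sf f) * (t:ℤ)) = ζ ^ ((Sf f - w) * (t:ℤ)) := by
        rw [← zpow_add₀ (zetaN_ne_zero N)]
        congr 1
        ring
      rw [hWc]
      calc ζ ^ (-(w * (t:ℤ))) * (((Wre f : ℝ):ℂ) * ζ ^ ((Sf f) * (t:ℤ)))
          = ((Wre f : ℝ):ℂ) * (ζ ^ (-(w * (t:ℤ))) * ζ ^ ((Sf f) * (t:ℤ))) := by ring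
        _ = ((Wre f : ℝ):ℂ) * ζ ^ ((Sf f - w) * (t:ℤ)) := by rw [hzp]
    rw [Finset.sum_congr rfl hper, Finset.sum_comm]
    apply Finset.sum_congr rfl
    intro f _
    rw [← Finset.mul_sum, orthN hN0]
  -- step 2 : T is a nonnegative real
  set QR : ℝ := ∑ f : Fin n → Bool, Wre f * (if (N:ℤ) ∣ (Sf f - w) then (N:ℝ) else 0) with hQR
  have h2 : T = ((QR : ℝ):ℂ) := by
    rw [h1, hQR]
    push_cast
    apply Finset.sum_congr rfl
    intro f _
    by_cases h : (N:ℤ) ∣ (Sf f - w) <;> simp [h]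
  have hQRnn : 0 ≤ QR := by
    apply Finset.sum_nonneg
    intro f _
    apply mul_nonneg (hWnn f)
    by_cases h : (N:ℤ) ∣ (Sf f - w) <;> simp [h] <;> positivity
  -- step 3 : N * P ≤ QR
  set Preal : ℝ := ∑ f : Fin n → Bool, if Sf f = w then Wre f else 0 with hP
  have h3 : (N:ℝ) * Preal ≤ QR := by
    rw [hP, Finset.mul_sum, hQR]
    apply Finset.sum_le_sum
    intro f _
    by_cases h : Sf f = w
    · have hdvd : (N:ℤ) ∣ (Sf f - w) := by rw [h]; simp
      rw [if_pos h, if_pos hdvd]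
      ring_nf
      exact le_refl _
    · rw [if_neg h]
      simp only [mul_zero]
      apply mul_nonneg (hWnn f)
      by_cases hd : (N:ℤ) ∣ (Sf f - w) <;> simp [hd] <;> positivity
  -- step 4 : QR = |T| and triangle inequality
  have h4 : QR = ‖T‖ := by
    rw [h2, Complex.norm_real, Real.norm_of_nonneg hQRnn]
  have h5 : ‖T‖ ≤ ∑ t ∈ range N,
      ∏ i, ‖(((1-p:ℝ):ℂ) + ((p:ℝ):ℂ) * ζ ^ (z i * (t:ℤ)))‖ := by
    rw [hT]
    refine le_trans (norm_sum_le _ _) ?_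
    apply Finset.sum_le_sum
    intro t _
    rw [norm_mul, zetaN_abs, one_mul, norm_prod]
  -- step 5 : AM-GM pointwise and reindexing
  have h6 : ∀ t : ℕ, ∏ i, ‖(((1-p:ℝ):ℂ) + ((p:ℝ):ℂ) * ζ ^ (z i * (t:ℤ)))‖
      ≤ (1/(n:ℝ)) * ∑ i, (‖(((1-p:ℝ):ℂ) + ((p:ℝ):ℂ) * ζ ^ (z i * (t:ℤ)))‖)^n := by
    intro t
    exact amgm hn _ (fun i => (norm_nonneg _))
  set G : ZMod N → ℝ := fun u => (‖(((1-p:ℝ):ℂ) + ((p:ℝ):ℂ) * ζ ^ ((u.val:ℕ):ℤ))‖)^n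
    with hG
  have hGeq : ∀ s : ℤ, (‖(((1-p:ℝ):ℂ) + ((p:ℝ):ℂ) * ζ ^ s)‖)^n = G ((s : ZMod N)) := by
    intro s
    rw [hG]
    have hcongr : ζ ^ s = ζ ^ ((((s : ZMod N)).val : ℕ):ℤ) := by
      apply zetaN_congr hN0
      rw [Int.cast_natCast, ZMod.natCast_rightInverse]
    rw [hcongr]
  have h8 : ∀ i : Fin n, ∑ t ∈ range N,
      (‖(((1-p:ℝ):ℂ) + ((p:ℝ):ℂ) * ζ ^ (z i * (t:ℤ)))‖)^n
      = ∑ t ∈ range N, (‖(((1-p:ℝ):ℂ) + ((p:ℝ):ℂ) * ζ ^ ((t:ℕ):ℤ))‖)^n := by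
    intro i
    have e1 : ∀ t : ℕ, (‖(((1-p:ℝ):ℂ) + ((p:ℝ):ℂ) * ζ ^ (z i * (t:ℤ)))‖)^n
        = G (((z i : ℤ) : ZMod N) * ((t:ℕ) : ZMod N)) := by
      intro t
      rw [hGeq (z i * (t:ℤ))]
      congr 1
      push_cast
      ring
    have e2 : ∀ t : ℕ, (‖(((1-p:ℝ):ℂ) + ((p:ℝ):ℂ) * ζ ^ ((t:ℕ):ℤ))‖)^n
        = G ((t:ℕ) : ZMod N) := by
      intro t
      rw [hGeq ((t:ℕ):ℤ)]
      congr 1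
      push_cast
      ring
    calc ∑ t ∈ range N, (‖(((1-p:ℝ):ℂ) + ((p:ℝ):ℂ) * ζ ^ (z i * (t:ℤ)))‖)^n
        = ∑ t ∈ range N, G (((z i : ℤ) : ZMod N) * ((t:ℕ) : ZMod N)) :=
          Finset.sum_congr rfl (fun t _ => e1 t)
      _ = ∑ u : ZMod N, G (((z i : ℤ) : ZMod N) * u) :=
          sum_range_zmod N (fun u => G (((z i : ℤ) : ZMod N) * u))
      _ = ∑ u : ZMod N, G u := sum_zmod_mul N G (hzN i)
      _ = ∑ t ∈ range N, G ((t:ℕ) : ZMod N) := (sum_range_zmod N G).symm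
      _ = ∑ t ∈ range N, (‖(((1-p:ℝ):ℂ) + ((p:ℝ):ℂ) * ζ ^ ((t:ℕ):ℤ))‖)^n :=
          Finset.sum_congr rfl (fun t _ => (e2 t).symm)
  -- step 6 : assemble the t-sums
  have h9 : ∑ t ∈ range N,
      ∏ i, ‖(((1-p:ℝ):ℂ) + ((p:ℝ):ℂ) * ζ ^ (z i * (t:ℤ)))‖
      ≤ ∑ t ∈ range N, (‖(((1-p:ℝ):ℂ) + ((p:ℝ):ℂ) * ζ ^ ((t:ℕ):ℤ))‖)^n := by
    calc ∑ t ∈ range N, ∏ i, ‖(((1-p:ℝ):ℂ) + ((p:ℝ):ℂ) * ζ ^ (z i * (t:ℤ)))‖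
        ≤ ∑ t ∈ range N, (1/(n:ℝ)) *
            ∑ i, (‖(((1-p:ℝ):ℂ) + ((p:ℝ):ℂ) * ζ ^ (z i * (t:ℤ)))‖)^n :=
          Finset.sum_le_sum (fun t _ => h6 t)
      _ = (1/(n:ℝ)) * ∑ i : Fin n, ∑ t ∈ range N,
            (‖(((1-p:ℝ):ℂ) + ((p:ℝ):ℂ) * ζ ^ (z i * (t:ℤ)))‖)^n := by
          rw [← Finset.mul_sum, Finset.sum_comm]
      _ = (1/(n:ℝ)) * ∑ i : Fin n, ∑ t ∈ range N,
            (‖(((1-p:ℝ):ℂ) + ((p:ℝ):ℂ) * ζ ^ ((t:ℕ):ℤ))‖)^n := by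
          congr 1
          exact Finset.sum_congr rfl (fun i _ => h8 i)
      _ = ∑ t ∈ range N, (‖(((1-p:ℝ):ℂ) + ((p:ℝ):ℂ) * ζ ^ ((t:ℕ):ℤ))‖)^n := by
          rw [Finset.sum_const, Finset.card_univ, Fintype.card_fin, nsmul_eq_mul]
          have hnne : (n:ℝ) ≠ 0 := by exact_mod_cast hn.ne'
          field_simp
  -- step 7 : decrease the exponent
  have habs1 : ∀ t : ℕ, ‖(((1-p:ℝ):ℂ) + ((p:ℝ):ℂ) * ζ ^ ((t:ℕ):ℤ))‖ ≤ 1 := by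
    intro t
    calc ‖(((1-p:ℝ):ℂ) + ((p:ℝ):ℂ) * ζ ^ ((t:ℕ):ℤ))‖
        ≤ ‖((1-p:ℝ):ℂ)‖ + ‖(((p:ℝ):ℂ) * ζ ^ ((t:ℕ):ℤ))‖ :=
          norm_add_le _ _
      _ = (1-p) + p := by
          rw [norm_mul, zetaN_abs, mul_one, Complex.norm_real, Complex.norm_real,
            Real.norm_of_nonneg (le_of_lt hq), Real.norm_of_nonneg (le_of_lt hp0)]
      _ = 1 := by ring
  have h10 : ∑ t ∈ range N, (‖(((1-p:ℝ):ℂ) + ((p:ℝ):ℂ) * ζ ^ ((t:ℕ):ℤ))‖)^n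
      ≤ ∑ t ∈ range N, (‖(((1-p:ℝ):ℂ) + ((p:ℝ):ℂ) * ζ ^ ((t:ℕ):ℤ))‖)^(2*m) := by
    apply Finset.sum_le_sum
    intro t _
    exact pow_le_pow_of_le_one (norm_nonneg _) (habs1 t) h2mn
  -- step 8 : final combination
  have h11 := sum_abs_sq_pow N m hN0 hmN p
  have hfinal : (N:ℝ) * Preal ≤ (N:ℝ) * ∑ k ∈ range (m+1), (bT m k p)^2 := by
    calc (N:ℝ) * Preal ≤ QR := h3
      _ = ‖T‖ := h4
      _ ≤ _ := h5
      _ ≤ _ := h9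
      _ ≤ _ := h10
      _ = (N:ℝ) * ∑ k ∈ range (m+1), (bT m k p)^2 := h11
  have hNpos : (0:ℝ) < N := by exact_mod_cast Nat.pos_of_ne_zero hN0
  have hPle : Preal ≤ ∑ k ∈ range (m+1), (bT m k p)^2 :=
    le_of_mul_le_mul_left hfinal hNpos
  calc (∑ f : Fin n → Bool, if (∑ i, if f i then z i else 0) = w
        then (∏ i, if f i then p else 1-p) else 0)
      = Preal := rfl
    _ ≤ ∑ k ∈ range (m+1), (bT m k p)^2 := hPle
    _ ≤ modalProb m p := bT_sq_sum_le_modal hp0 hp1 m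

end keyint

section rationalize

lemma exists_functional {n : ℕ} (a : Fin n → ℝ) (ha : ∀ i, a i ≠ 0) :
    ∃ φ : ℝ →ₗ[ℚ] ℚ, ∀ i, φ (a i) ≠ 0 := by
  classical
  suffices h : ∀ s : Finset (Fin n), ∃ φ : ℝ →ₗ[ℚ] ℚ, ∀ i ∈ s, φ (a i) ≠ 0 by
    obtain ⟨φ, hφ⟩ := h Finset.univ
    exact ⟨φ, fun i => hφ i (Finset.mem_univ i)⟩
  intro s
  induction s using Finset.induction with
  | empty => exact ⟨0, fun i hi => absurd hi (Finset.notMem_empty i)⟩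
  | insert j s hj ih =>
    obtain ⟨φ, hφ⟩ := ih
    -- a functional not vanishing at a j
    set B := Module.Basis.ofVectorSpace ℚ ℝ with hBdef
    have hrepr : B.repr (a j) ≠ 0 := by
      intro h
      exact ha j (B.repr.map_eq_zero_iff.mp h)
    obtain ⟨idx, hidx⟩ := Finsupp.ne_iff.mp hrepr
    set ψ : ℝ →ₗ[ℚ] ℚ := B.coord idx with hψdef
    have hψj : ψ (a j) ≠ 0 := by
      rw [hψdef, Module.Basis.coord_apply]
      simpa using hidx
    -- avoid the bad values of t
    set bad : Finset ℚ :=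
      ((insert j s).filter (fun i => ψ (a i) ≠ 0)).image (fun i => -φ (a i) / ψ (a i)) with hbad
    obtain ⟨t, ht⟩ := Infinite.exists_notMem_finset bad
    refine ⟨φ + t • ψ, ?_⟩
    intro i hi
    have happ : (φ + t • ψ) (a i) = φ (a i) + t * ψ (a i) := by simp
    rw [happ]
    by_cases hz : ψ (a i) = 0
    · rw [hz, mul_zero, add_zero]
      rcases Finset.mem_insert.mp hi with rfl | his
      · exact absurd hz hψj
      · exact hφ i his
    · intro hcon
      apply ht
      rw [hbad]
      apply Finset.mem_image.mpr
      refine ⟨i, Finset.mem_filter.mpr ⟨hi, hz⟩, ?_⟩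
      field_simp
      linarith [hcon]

end rationalize

section realred
open Finset

theorem key_real (n : ℕ) (hn : 0 < n) (p : ℝ) (hp0 : 0 < p) (hp1 : p < 1/2)
    (a : Fin n → ℝ) (ha : ∀ i, a i ≠ 0) (x : ℝ) :
    (∑ f : Fin n → Bool, if (∑ i, if f i then a i else 0) = x
        then (∏ i, if f i then p else 1-p) else 0) ≤ modalProb (n / 2) p := by
  classical
  have hq : (0:ℝ) < 1 - p := by linarith
  have hWnn : ∀ f : Fin n → Bool, 0 ≤ (∏ i, if f i then p else 1-p) := by
    intro f
    apply Finset.prod_nonneg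
    intro i _
    by_cases h : f i <;> simp [h] <;> linarith
  have hmodal_nn : 0 ≤ modalProb (n / 2) p := by
    have : modalProb (n / 2) p = bT (n/2) ⌊((n/2 : ℕ) + 1 : ℝ) * p⌋₊ p := rfl
    rw [this]
    exact bT_nonneg hp0.le (by linarith) _ _
  by_cases hE : ∃ f₀ : Fin n → Bool, (∑ i, if f₀ i then a i else 0) = x
  swap
  · -- empty event
    have hzero : (∑ f : Fin n → Bool, if (∑ i, if f i then a i else 0) = x
        then (∏ i, if f i then p else 1-p) else 0) = 0 := by
      apply Finset.sum_eq_zero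
      intro f _
      rw [if_neg (fun h => hE ⟨f, h⟩)]
    rw [hzero]
    exact hmodal_nn
  obtain ⟨f₀, hf₀⟩ := hE
  obtain ⟨φ, hφ⟩ := exists_functional a ha
  set qr : Fin n → ℚ := fun i => φ (a i) with hqr
  set y : ℚ := φ x with hy
  set d : ℕ := ∏ i : Fin n, (qr i).den with hd
  have hdpos : 0 < d := by
    rw [hd]
    apply Finset.prod_pos
    intro i _
    exact Nat.pos_of_ne_zero (qr i).den_nz
  have hden_dvd : ∀ i, (qr i).den ∣ d := fun i =>
    Finset.dvd_prod_of_mem (fun j => (qr j).den) (Finset.mem_univ i)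
  set z : Fin n → ℤ := fun i => (qr i).num * ((d / (qr i).den : ℕ) : ℤ) with hzdef
  have hqden : ∀ i, (qr i) * ((qr i).den : ℚ) = (qr i).num := by
    intro i
    exact_mod_cast Rat.mul_den_eq_num (qr i)
  have hzq : ∀ i, ((z i : ℤ) : ℚ) = qr i * d := by
    intro i
    have he : (qr i).den * (d / (qr i).den) = d := Nat.mul_div_cancel' (hden_dvd i)
    have h1 : ((z i : ℤ) : ℚ) = ((qr i).num : ℚ) * ((d / (qr i).den : ℕ) : ℚ) := by
      rw [hzdef]
      simp only [Int.cast_mul, Int.cast_natCast]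
    rw [h1, ← hqden i]
    have h2 : (d : ℚ) = ((qr i).den : ℚ) * ((d / (qr i).den : ℕ) : ℚ) := by
      rw [← Nat.cast_mul, he]
    rw [h2]
    ring
  have hzne : ∀ i, z i ≠ 0 := by
    intro i
    rw [hzdef]
    apply mul_ne_zero
    · exact Rat.num_ne_zero.mpr (hφ i)
    · have : 0 < d / (qr i).den :=
        Nat.div_pos (Nat.le_of_dvd hdpos (hden_dvd i)) (Nat.pos_of_ne_zero (qr i).den_nz)
      exact_mod_cast this.ne'
  set w : ℤ := ∑ i, if f₀ i then z i else 0 with hw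
  -- every solution of the real equation solves the integer one
  have himp : ∀ f : Fin n → Bool, (∑ i, if f i then a i else 0) = x →
      (∑ i, if f i then z i else 0) = w := by
    intro f hf
    have hsum : ∀ g : Fin n → Bool, (∑ i, if g i then a i else 0) = x →
        (∑ i, if g i then (z i : ℚ) else 0) = y * d := by
      intro g hg
      have h1 : φ (∑ i, if g i then a i else 0) = y := by rw [hg]
      rw [map_sum] at h1
      have h2 : ∀ i : Fin n, φ (if g i then a i else 0) = if g i then qr i else 0 := by
        intro i
        rw [apply_ite φ, map_zero]
      rw [Finset.sum_congr rfl (fun i _ => h2 i)] at h1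
      calc (∑ i, if g i then (z i : ℚ) else 0)
          = ∑ i, (if g i then qr i else 0) * d := by
            apply Finset.sum_congr rfl
            intro i _
            by_cases h : g i <;> simp [h, hzq i]
        _ = (∑ i, if g i then qr i else 0) * d := by rw [Finset.sum_mul]
        _ = y * d := by rw [h1]
    have ha1 := hsum f hf
    have ha2 := hsum f₀ hf₀
    have : (∑ i, if f i then (z i : ℚ) else 0) = (∑ i, if f₀ i then (z i : ℚ) else 0) := by
      rw [ha1, ha2]
    have hcast : ((∑ i, if f i then z i else 0 : ℤ) : ℚ)
        = ((∑ i, if f₀ i then z i else 0 : ℤ) : ℚ) := by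
      push_cast
      convert this using 2 <;> rename_i i <;> by_cases h : f i <;> by_cases h0 : f₀ i <;> simp [h, h0]
    exact_mod_cast hcast
  -- compare with the integer sum and conclude
  calc (∑ f : Fin n → Bool, if (∑ i, if f i then a i else 0) = x
        then (∏ i, if f i then p else 1-p) else 0)
      ≤ (∑ f : Fin n → Bool, if (∑ i, if f i then z i else 0) = w
        then (∏ i, if f i then p else 1-p) else 0) := by
        apply Finset.sum_le_sum
        intro f _
        by_cases h : (∑ i, if f i then a i else 0) = x
        · rw [if_pos h, if_pos (himp f h)]
        · rw [if_neg h]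
          by_cases h2 : (∑ i, if f i then z i else 0) = w
          · rw [if_pos h2]; exact hWnn f
          · rw [if_neg h2]
    _ ≤ modalProb (n / 2) p := key_int n hn p hp0 hp1 z hzne w

end realred

section measureside
open MeasureTheory Finset

open Classical in
lemma bernoulli_apply (n : ℕ) (p : ℝ) (hp0 : 0 ≤ p) (hp1 : p ≤ 1) (S : Set (Fin n → Bool)) :
    bernoulliProduct (Fin n) (fun _ => p) S
      = ENNReal.ofReal (∑ f : Fin n → Bool,
          if f ∈ S then (∏ i, if f i then p else 1-p) else 0) := by
  classical
  have hq : (0:ℝ) ≤ 1 - p := by linarith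
  have hms : MeasurableSet S := S.toFinite.measurableSet
  unfold bernoulliProduct
  have h1 : ((∑ f : Fin n → Bool,
      (∏ i : Fin n, if f i then ENNReal.ofReal p else ENNReal.ofReal (1 - p)) •
        Measure.dirac f) : Measure (Fin n → Bool)) S
      = ∑ f : Fin n → Bool,
        (∏ i : Fin n, if f i then ENNReal.ofReal p else ENNReal.ofReal (1 - p)) *
          (Measure.dirac f S) := by
    rw [show ((∑ f : Fin n → Bool,
        (∏ i : Fin n, if f i then ENNReal.ofReal p else ENNReal.ofReal (1 - p)) •
          Measure.dirac f) : Measure (Fin n → Bool)) S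
        = (∑ f : Fin n → Bool,
          ⇑((∏ i : Fin n, if f i then ENNReal.ofReal p else ENNReal.ofReal (1 - p)) •
            Measure.dirac f)) S from by rw [← Measure.coe_finset_sum]]
    rw [Finset.sum_apply]
    apply Finset.sum_congr rfl
    intro f _
    rw [Measure.smul_apply, smul_eq_mul]
  rw [h1]
  have h2 : ∀ f : Fin n → Bool,
      (∏ i : Fin n, if f i then ENNReal.ofReal p else ENNReal.ofReal (1 - p)) *
        (Measure.dirac f S)
      = ENNReal.ofReal (if f ∈ S then (∏ i, if f i then p else 1-p) else 0) := by
    intro f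
    have hw : (∏ i : Fin n, if f i then ENNReal.ofReal p else ENNReal.ofReal (1 - p))
        = ENNReal.ofReal (∏ i, if f i then p else 1-p) := by
      rw [ENNReal.ofReal_prod_of_nonneg (fun i _ => by
        by_cases h : f i <;> simp [h] <;> linarith)]
      apply Finset.prod_congr rfl
      intro i _
      by_cases h : f i <;> simp [h]
    rw [hw, Measure.dirac_apply' f hms]
    by_cases h : f ∈ S
    · rw [Set.indicator_apply, if_pos h, if_pos h]
      simp
    · rw [Set.indicator_apply, if_neg h, if_neg h]
      simp
  rw [Finset.sum_congr rfl (fun f _ => h2 f)]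
  have hnn : ∀ f : Fin n → Bool, 0 ≤ (if f ∈ S then (∏ i, if f i then p else 1-p) else 0) := by
    intro f
    by_cases h : f ∈ S
    · rw [if_pos h]
      apply Finset.prod_nonneg
      intro i _
      by_cases hfi : f i <;> simp [hfi] <;> linarith
    · rw [if_neg h]
  exact (ENNReal.ofReal_sum_of_nonneg (fun f _ => hnn f)).symm

end measureside
end auxiliaryLemmas

/-- Theorem 2.18, Littlewood–Offord type anticoncentration.
For `n ≥ 1`, `p ∈ (0,1/2)`, nonzero reals `a i` and independent `Bernoulli(p)` variables
`ξ i`, the probability that `∑ a i ξ i = x` is at most the modal probability `M(⌊n/2⌋, p)`. -/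
theorem stmt9 (n : ℕ) (hn : 0 < n) (p : ℝ) (hp0 : 0 < p) (hp1 : p < 1 / 2)
    (a : Fin n → ℝ) (ha : ∀ i, a i ≠ 0) (x : ℝ) :
    bernoulliProduct (Fin n) (fun _ => p)
        {f | (∑ i : Fin n, if f i then a i else 0) = x}
      ≤ ENNReal.ofReal (modalProb (n / 2) p) := by
  classical
  have hq : (0:ℝ) < 1 - p := by linarith
  set S : Set (Fin n → Bool) := {f | (∑ i : Fin n, if f i then a i else 0) = x} with hS
  have happly : bernoulliProduct (Fin n) (fun _ => p) S
      = ENNReal.ofReal (∑ f : Fin n → Bool,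
          if f ∈ S then (∏ i, if f i then p else 1-p) else 0) :=
    bernoulli_apply n p hp0.le (by linarith) S
  rw [happly]
  apply ENNReal.ofReal_le_ofReal
  have hmem : ∀ f : Fin n → Bool,
      (if f ∈ S then (∏ i, if f i then p else 1-p) else 0)
      = (if (∑ i : Fin n, if f i then a i else 0) = x
          then (∏ i, if f i then p else 1-p) else 0) := by
    intro f
    rfl
  rw [Finset.sum_congr rfl (fun f _ => hmem f)]
  exact key_real n hn p hp0 hp1 a ha x
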